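/- Let P and P' be positive choice programs with the same intensional rules, idb(P') = idb(P), and extensional databases satisfying edb(P') ⊇ edb(P). Then for every choice model M of P there exists a choice model M' of P' with M' ⊇ M; that is, positive choice programs define monotonic multi-valued mappings from their extensional to their intensional component. -/

import Mathlib

/-!
# STATEMENT 2

Let `P` and `P'` be positive choice programs with the same intensional rules,
`idb(P') = idb(P)`, and extensional databases satisfying `edb(P') ⊇ edb(P)`.
Then for every choice model `M` of `P` there exists a choice model `M'` of
`P'` with `M' ⊇ M`: positive choice programs define monotonic multi-valued
mappings from their extensional to their intensional component.

Here a program is presented as a pair of an intensional component (the list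
`P` of rules, shared by both programs) and an extensional component (a set of
ground facts), and a *choice model* is a total stable model of the first-order
equivalent `foe`, obtained by the standard `chosen`/`diffChoice` rewriting of
the choice goals.  The framework is as in Statement 0.
-/

/-- A ground normal logic-program rule over ground atoms `α`. -/
structure GRule (α : Type) where
  head : α
  pos : Set α
  neg : Set α

/-- A ground normal logic program is a set of ground rules. -/
abbrev GProgram (α : Type) := Set (GRule α)

/-- `M` satisfies a ground rule. -/
def GRule.Sat {α : Type} (r : GRule α) (M : Set α) : Prop :=
  r.pos ⊆ M → (∀ a ∈ r.neg, a ∉ M) → r.head ∈ M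

/-- `M` is a model of (i.e. closed under) the program `P`. -/
def IsModel {α : Type} (P : GProgram α) (M : Set α) : Prop := ∀ r ∈ P, r.Sat M

/-- The Gelfond–Lifschitz reduct of `P` with respect to `M`: delete every rule
whose negative body intersects `M`, and delete the negative bodies of the
remaining rules. -/
def reduct {α : Type} (P : GProgram α) (M : Set α) : GProgram α :=
  {r | ∃ r' ∈ P, (∀ a ∈ r'.neg, a ∉ M) ∧ r = ⟨r'.head, r'.pos, ∅⟩}

/-- The least (Herbrand) model of a program: the intersection of all models. -/
def leastModel {α : Type} (P : GProgram α) : Set α := ⋂₀ {N | IsModel P N}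

/-- `M` is a (total, two-valued) stable model of `P` in the sense of
Gelfond–Lifschitz: `M` is the least model of the reduct of `P` by `M`.
Every such model is total: each atom is either true (in `M`) or false. -/
def IsStableModel {α : Type} (P : GProgram α) (M : Set α) : Prop :=
  M = leastModel (reduct P M)

/-! ## Datalog with choice goals -/

/-- Terms: variables (named by naturals) and constants from `C`. -/
inductive Term (C : Type) where
  | var (v : ℕ)
  | const (c : C)

/-- A relational schema: predicate symbols with arities. -/
structure Schema where
  pred : Type
  ar : pred → ℕ

/-- A (possibly non-ground) atom over schema `S` and constants `C`. -/
structure Atom (S : Schema) (C : Type) where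
  p : S.pred
  args : Fin (S.ar p) → Term C

/-- A ground atom. -/
structure GAtom (S : Schema) (C : Type) where
  p : S.pred
  args : Fin (S.ar p) → C

/-- A Datalog rule whose body may additionally contain choice goals
`choice((X),(Y))`, recorded in `cgoals` as pairs `(X, Y)` of disjoint lists of
variables, with nonempty right side `Y`. -/
structure CRule (S : Schema) (C : Type) where
  head : Atom S C
  pos : List (Atom S C)
  neg : List (Atom S C)
  cgoals : List (List ℕ × List ℕ)
  cgoals_disjoint : ∀ g ∈ cgoals, ∀ v ∈ g.1, v ∉ g.2
  cgoals_right_ne : ∀ g ∈ cgoals, g.2 ≠ []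

/-- A choice program: a finite list of rules, possibly with choice goals. -/
abbrev CProgram (S : Schema) (C : Type) := List (CRule S C)

/-- A choice program is *positive* when its non-choice goals contain no
negation. -/
def CProgram.Positive {S : Schema} {C : Type} (P : CProgram S C) : Prop :=
  ∀ r ∈ P, r.neg = []

def Term.eval {C : Type} (ν : ℕ → C) : Term C → C
  | .var v => ν v
  | .const c => c

def Atom.ground {S : Schema} {C : Type} (a : Atom S C) (ν : ℕ → C) : GAtom S C :=
  ⟨a.p, fun i => (a.args i).eval ν⟩

/-- `W`: the list of all variables occurring in the choice goals of a rule. -/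
def CRule.W {S : Schema} {C : Type} (r : CRule S C) : List ℕ :=
  (r.cgoals.flatMap fun g => g.1 ++ g.2).dedup

/-- Atoms of the first-order equivalent `foe(P)`: the original (base) atoms
together with `chosen_r` and `diffChoice_r` atoms for each choice rule `r`
(rules are referred to by their position in the program). -/
inductive FAtom (S : Schema) (C : Type) where
  | base (a : GAtom S C)
  | chosen (r : ℕ) (w : List C)
  | diff (r : ℕ) (w : List C)

/-- The (ground) positive body of an instantiated rule, as base atoms. -/
def posBody {S : Schema} {C : Type} (r : CRule S C) (ν : ℕ → C) : Set (FAtom S C) :=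
  {x | ∃ a ∈ r.pos, x = FAtom.base (a.ground ν)}

/-- The (ground) negative body of an instantiated rule, as base atoms. -/
def negBody {S : Schema} {C : Type} (r : CRule S C) (ν : ℕ → C) : Set (FAtom S C) :=
  {x | ∃ a ∈ r.neg, x = FAtom.base (a.ground ν)}

/-- The first-order equivalent `foe(P)` of a choice program `P` over the
database `edb`, given as the set of its ground instances:

* facts of the database;
* rules without choice goals, unchanged;
* for each choice rule `r : A ← B(Z), choice((X₁),(Y₁)), …, choice((Xₖ),(Yₖ))`:
  - `r′ : A ← B(Z), chosenᵣ(W)` where `W` lists all variables of the choice goals,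
  - `chosenᵣ(W) ← B(Z), ¬ diffChoiceᵣ(W)`,
  - for each choice goal `choice((Xᵢ),(Yᵢ))`:
    `diffChoiceᵣ(W) ← chosenᵣ(W′), Yᵢ ≠ Yᵢ′` where `W′` agrees with `W` on `Xᵢ`
    (all other variables being fresh primed copies). -/
def foe {S : Schema} {C : Type} (P : CProgram S C) (edb : Set (GAtom S C)) :
    GProgram (FAtom S C) :=
  {r | ∃ a ∈ edb, r = ⟨FAtom.base a, ∅, ∅⟩} ∪
  {r | ∃ i : Fin P.length, ∃ ν : ℕ → C, (P.get i).cgoals = [] ∧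
        r = ⟨FAtom.base ((P.get i).head.ground ν), posBody (P.get i) ν,
             negBody (P.get i) ν⟩} ∪
  {r | ∃ i : Fin P.length, ∃ ν : ℕ → C, (P.get i).cgoals ≠ [] ∧
        r = ⟨FAtom.base ((P.get i).head.ground ν),
             insert (FAtom.chosen i ((P.get i).W.map ν)) (posBody (P.get i) ν),
             negBody (P.get i) ν⟩} ∪
  {r | ∃ i : Fin P.length, ∃ ν : ℕ → C, (P.get i).cgoals ≠ [] ∧
        r = ⟨FAtom.chosen i ((P.get i).W.map ν), posBody (P.get i) ν,
             insert (FAtom.diff i ((P.get i).W.map ν)) (negBody (P.get i) ν)⟩} ∪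
  {r | ∃ i : Fin P.length, ∃ g ∈ (P.get i).cgoals, ∃ ν ν' : ℕ → C,
        (∀ v ∈ g.1, ν v = ν' v) ∧ (∃ v ∈ g.2, ν v ≠ ν' v) ∧
        r = ⟨FAtom.diff i ((P.get i).W.map ν),
             {FAtom.chosen i ((P.get i).W.map ν')}, ∅⟩}

/-- A choice model of the choice program with rules `P` and database `edb`:
a total stable model of its first-order equivalent. -/
def IsChoiceModel {S : Schema} {C : Type} (P : CProgram S C)
    (edb : Set (GAtom S C)) (M : Set (FAtom S C)) : Prop :=
  IsStableModel (foe P edb) M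

section Aux2
variable {α : Type}

lemma aux_leastModel_le {P : GProgram α} {N : Set α} (h : IsModel P N) : leastModel P ⊆ N :=
  Set.sInter_subset_of_mem h

lemma aux_leastModel_isModel {P : GProgram α} (h : ∀ r ∈ P, r.neg = ∅) :
    IsModel P (leastModel P) := by
  intro r hr hpos _
  rw [leastModel, Set.mem_sInter]
  intro N hN
  exact hN r hr (Set.Subset.trans hpos (Set.sInter_subset_of_mem hN)) (by rw [h r hr]; simp)

lemma aux_leastModel_mono {P Q : GProgram α} (h : P ⊆ Q) : leastModel P ⊆ leastModel Q := by
  intro a ha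
  rw [leastModel, Set.mem_sInter]
  intro N hN
  exact Set.mem_sInter.mp ha N (fun r hr => hN r (h hr))

lemma aux_reduct_neg {P : GProgram α} {M : Set α} : ∀ r ∈ reduct P M, r.neg = ∅ := by
  rintro r ⟨r', _, _, rfl⟩; rfl

lemma aux_reduct_model {P : GProgram α} {M : Set α} (h : IsStableModel P M) :
    IsModel (reduct P M) M := by
  have h' : M = leastModel (reduct P M) := h
  have := aux_leastModel_isModel (aux_reduct_neg (P := P) (M := M))
  rwa [← h'] at this

end Aux2

section Aux3
variable {S : Schema} {C : Type}

lemma aux_negBody_empty {r : CRule S C} (h : r.neg = []) (ν : ℕ → C) : negBody r ν = ∅ := by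
  ext x; simp [negBody, h]

/-- Two chosen tuples conflict on rule `i`. -/
def ChConf (P : CProgram S C) (i : Fin P.length) (w w' : List C) : Prop :=
  ∃ g ∈ (P.get i).cgoals, ∃ ν ν' : ℕ → C, w = (P.get i).W.map ν ∧ w' = (P.get i).W.map ν' ∧
    (∀ v ∈ g.1, ν v = ν' v) ∧ (∃ v ∈ g.2, ν v ≠ ν' v)

lemma aux_mem_W {r : CRule S C} {g} (hg : g ∈ r.cgoals) {v : ℕ} (hv : v ∈ g.1 ∨ v ∈ g.2) :
    v ∈ r.W := by
  unfold CRule.W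
  rw [List.mem_dedup, List.mem_flatMap]
  exact ⟨g, hg, List.mem_append.mpr hv⟩

lemma aux_conf_irrefl {P : CProgram S C} {i : Fin P.length} {w : List C} : ¬ ChConf P i w w := by
  rintro ⟨g, hg, ν, ν', h1, h2, _, v, hv, hne⟩
  exact hne (List.map_eq_map_iff.mp (h1.symm.trans h2) v (aux_mem_W hg (Or.inr hv)))

lemma aux_conf_symm {P : CProgram S C} {i : Fin P.length} {w w' : List C}
    (h : ChConf P i w w') : ChConf P i w' w := by
  obtain ⟨g, hg, ν, ν', h1, h2, hag, v, hv, hne⟩ := h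
  exact ⟨g, hg, ν', ν, h2, h1, fun u hu => (hag u hu).symm, v, hv, Ne.symm hne⟩

end Aux3
section Aux4
variable {S : Schema} {C : Type}

/-- The Horn program associated to a database `edb'` and a set `Ch` of chosen
tuples: facts, plain rules, modified rules, chosen rules restricted to `Ch`
(all without negation), and diffChoice rules. -/
def RCh (P : CProgram S C) (edb' : Set (GAtom S C)) (Ch : Set (Fin P.length × List C)) :
    GProgram (FAtom S C) :=
  {r | ∃ a ∈ edb', r = ⟨FAtom.base a, ∅, ∅⟩} ∪
  {r | ∃ i : Fin P.length, ∃ ν : ℕ → C, (P.get i).cgoals = [] ∧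
        r = ⟨FAtom.base ((P.get i).head.ground ν), posBody (P.get i) ν, ∅⟩} ∪
  {r | ∃ i : Fin P.length, ∃ ν : ℕ → C, (P.get i).cgoals ≠ [] ∧
        r = ⟨FAtom.base ((P.get i).head.ground ν),
             insert (FAtom.chosen i ((P.get i).W.map ν)) (posBody (P.get i) ν), ∅⟩} ∪
  {r | ∃ i : Fin P.length, ∃ ν : ℕ → C, (P.get i).cgoals ≠ [] ∧
        (i, (P.get i).W.map ν) ∈ Ch ∧
        r = ⟨FAtom.chosen i ((P.get i).W.map ν), posBody (P.get i) ν, ∅⟩} ∪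
  {r | ∃ i : Fin P.length, ∃ g ∈ (P.get i).cgoals, ∃ ν ν' : ℕ → C,
        (∀ v ∈ g.1, ν v = ν' v) ∧ (∃ v ∈ g.2, ν v ≠ ν' v) ∧
        r = ⟨FAtom.diff i ((P.get i).W.map ν),
             {FAtom.chosen i ((P.get i).W.map ν')}, ∅⟩}

def Cl (P : CProgram S C) (edb' : Set (GAtom S C)) (Ch : Set (Fin P.length × List C)) :
    Set (FAtom S C) :=
  leastModel (RCh P edb' Ch)

variable {P : CProgram S C} {edb' : Set (GAtom S C)} {Ch Ch' : Set (Fin P.length × List C)}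

lemma mem_RCh_fact {a : GAtom S C} (ha : a ∈ edb') :
    (⟨FAtom.base a, ∅, ∅⟩ : GRule (FAtom S C)) ∈ RCh P edb' Ch :=
  Or.inl (Or.inl (Or.inl (Or.inl ⟨a, ha, rfl⟩)))

lemma mem_RCh_plain {i : Fin P.length} {ν : ℕ → C} (h : (P.get i).cgoals = []) :
    (⟨FAtom.base ((P.get i).head.ground ν), posBody (P.get i) ν, ∅⟩ : GRule (FAtom S C)) ∈
      RCh P edb' Ch :=
  Or.inl (Or.inl (Or.inl (Or.inr ⟨i, ν, h, rfl⟩)))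

lemma mem_RCh_mod {i : Fin P.length} {ν : ℕ → C} (h : (P.get i).cgoals ≠ []) :
    (⟨FAtom.base ((P.get i).head.ground ν),
      insert (FAtom.chosen i ((P.get i).W.map ν)) (posBody (P.get i) ν), ∅⟩ :
      GRule (FAtom S C)) ∈ RCh P edb' Ch :=
  Or.inl (Or.inl (Or.inr ⟨i, ν, h, rfl⟩))

lemma mem_RCh_chosen {i : Fin P.length} {ν : ℕ → C} (h : (P.get i).cgoals ≠ [])
    (hc : (i, (P.get i).W.map ν) ∈ Ch) :
    (⟨FAtom.chosen i ((P.get i).W.map ν), posBody (P.get i) ν, ∅⟩ : GRule (FAtom S C)) ∈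
      RCh P edb' Ch :=
  Or.inl (Or.inr ⟨i, ν, h, hc, rfl⟩)

lemma mem_RCh_diff {i : Fin P.length} {g} (hg : g ∈ (P.get i).cgoals) {ν ν' : ℕ → C}
    (hag : ∀ v ∈ g.1, ν v = ν' v) (hd : ∃ v ∈ g.2, ν v ≠ ν' v) :
    (⟨FAtom.diff i ((P.get i).W.map ν), {FAtom.chosen i ((P.get i).W.map ν')}, ∅⟩ :
      GRule (FAtom S C)) ∈ RCh P edb' Ch :=
  Or.inr ⟨i, g, hg, ν, ν', hag, hd, rfl⟩

lemma aux_RCh_neg : ∀ r ∈ RCh P edb' Ch, r.neg = ∅ := by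
  rintro r ((((⟨a, ha, rfl⟩ | ⟨i, ν, h, rfl⟩) | ⟨i, ν, h, rfl⟩) | ⟨i, ν, h, hc, rfl⟩) |
    ⟨i, g, hg, ν, ν', h1, h2, rfl⟩) <;> rfl

lemma aux_Cl_model : IsModel (RCh P edb' Ch) (Cl P edb' Ch) :=
  aux_leastModel_isModel aux_RCh_neg

lemma aux_RCh_mono (h : Ch ⊆ Ch') : RCh P edb' Ch ⊆ RCh P edb' Ch' := by
  rintro r ((((h1 | h1) | h1) | ⟨i, ν, hne, hc, rfl⟩) | h1)
  · exact Or.inl (Or.inl (Or.inl (Or.inl h1)))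
  · exact Or.inl (Or.inl (Or.inl (Or.inr h1)))
  · exact Or.inl (Or.inl (Or.inr h1))
  · exact Or.inl (Or.inr ⟨i, ν, hne, h hc, rfl⟩)
  · exact Or.inr h1

lemma aux_Cl_mono (h : Ch ⊆ Ch') : Cl P edb' Ch ⊆ Cl P edb' Ch' :=
  aux_leastModel_mono (aux_RCh_mono h)

/-- Every chosen atom in the closure comes from `Ch`. -/
lemma aux_chosen_mem {n : ℕ} {w : List C} (h : FAtom.chosen n w ∈ Cl P edb' Ch) :
    ∃ i : Fin P.length, (i : ℕ) = n ∧ (i, w) ∈ Ch := by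
  have hmod : IsModel (RCh P edb' Ch)
      {x ∈ Cl P edb' Ch | ∀ n' w', x = FAtom.chosen n' w' →
        ∃ i : Fin P.length, (i : ℕ) = n' ∧ (i, w') ∈ Ch} := by
    intro r hr hp _
    have hsub : {x ∈ Cl P edb' Ch | ∀ n' w', x = FAtom.chosen n' w' →
        ∃ i : Fin P.length, (i : ℕ) = n' ∧ (i, w') ∈ Ch} ⊆ Cl P edb' Ch := Set.sep_subset _ _
    have hhead : r.head ∈ Cl P edb' Ch :=
      aux_Cl_model r hr (Set.Subset.trans hp hsub) (by rw [aux_RCh_neg r hr]; simp)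
    refine ⟨hhead, ?_⟩
    rcases hr with ((((⟨a, ha, rfl⟩ | ⟨i, ν, hne, rfl⟩) | ⟨i, ν, hne, rfl⟩) |
      ⟨i, ν, hne, hc, rfl⟩) | ⟨i, g, hg, ν, ν', h1, h2, rfl⟩)
    · intro n' w' hx; simp at hx
    · intro n' w' hx; simp at hx
    · intro n' w' hx; simp at hx
    · intro n' w' hx
      rw [FAtom.chosen.injEq] at hx
      exact ⟨i, hx.1, hx.2 ▸ hc⟩
    · intro n' w' hx; simp at hx
  exact (aux_leastModel_le hmod h).2 n w rfl

/-- Every diff atom in the closure is supported by a conflicting chosen atom. -/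
lemma aux_diff_mem {n : ℕ} {w : List C} (h : FAtom.diff n w ∈ Cl P edb' Ch) :
    ∃ i : Fin P.length, (i : ℕ) = n ∧
      ∃ w', FAtom.chosen (i : ℕ) w' ∈ Cl P edb' Ch ∧ ChConf P i w w' := by
  have hmod : IsModel (RCh P edb' Ch)
      {x ∈ Cl P edb' Ch | ∀ n' w', x = FAtom.diff n' w' →
        ∃ i : Fin P.length, (i : ℕ) = n' ∧
          ∃ w'', FAtom.chosen (i : ℕ) w'' ∈ Cl P edb' Ch ∧ ChConf P i w' w''} := by
    intro r hr hp _
    have hsub : {x ∈ Cl P edb' Ch | ∀ n' w', x = FAtom.diff n' w' →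
        ∃ i : Fin P.length, (i : ℕ) = n' ∧
          ∃ w'', FAtom.chosen (i : ℕ) w'' ∈ Cl P edb' Ch ∧ ChConf P i w' w''} ⊆
        Cl P edb' Ch := Set.sep_subset _ _
    have hhead : r.head ∈ Cl P edb' Ch :=
      aux_Cl_model r hr (Set.Subset.trans hp hsub) (by rw [aux_RCh_neg r hr]; simp)
    refine ⟨hhead, ?_⟩
    rcases hr with ((((⟨a, ha, rfl⟩ | ⟨i, ν, hne, rfl⟩) | ⟨i, ν, hne, rfl⟩) |
      ⟨i, ν, hne, hc, rfl⟩) | ⟨i, g, hg, ν, ν', h1, h2, rfl⟩)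
    · intro n' w' hx; simp at hx
    · intro n' w' hx; simp at hx
    · intro n' w' hx; simp at hx
    · intro n' w' hx; simp at hx
    · intro n' w' hx
      rw [FAtom.diff.injEq] at hx
      have hcw : FAtom.chosen (i : ℕ) ((P.get i).W.map ν') ∈ Cl P edb' Ch := by
        have : FAtom.chosen (i : ℕ) ((P.get i).W.map ν') ∈
            ({FAtom.chosen (i : ℕ) ((P.get i).W.map ν')} : Set (FAtom S C)) := rfl
        exact hsub (hp this)
      exact ⟨i, hx.1, (P.get i).W.map ν',
        hcw, g, hg, ν, ν', hx.2.symm, rfl, h1, h2⟩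
  exact (aux_leastModel_le hmod h).2 n w rfl

end Aux4
section Aux5
variable {S : Schema} {C : Type} {P : CProgram S C} {edb edb' : Set (GAtom S C)}
  {M : Set (FAtom S C)}

lemma aux_not_chosen_diff (hM : IsStableModel (foe P edb) M) {i : Fin P.length} {w : List C}
    (h1 : FAtom.chosen (i : ℕ) w ∈ M) (h2 : FAtom.diff (i : ℕ) w ∈ M) : False := by
  have hM' : M = leastModel (reduct (foe P edb) M) := hM
  have hMmod := aux_reduct_model hM
  have hmod : IsModel (reduct (foe P edb) M) (M \ {FAtom.chosen (i : ℕ) w}) := by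
    rintro r ⟨r', hr', hsurv, rfl⟩ hposN _
    have hposM : r'.pos ⊆ M := Set.Subset.trans hposN Set.diff_subset
    have hheadM : r'.head ∈ M := hMmod (⟨r'.head, r'.pos, ∅⟩ : GRule (FAtom S C)) ⟨r', hr', hsurv, rfl⟩ hposM (by simp)
    refine ⟨hheadM, ?_⟩
    intro hx
    rw [Set.mem_singleton_iff] at hx
    rcases hr' with ((((⟨a, ha, rfl⟩ | ⟨j, ν, hne, rfl⟩) | ⟨j, ν, hne, rfl⟩) |
      ⟨j, ν, hne, rfl⟩) | ⟨j, g, hg, ν, ν', hag, hd, rfl⟩)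
    · simp at hx
    · simp at hx
    · simp at hx
    · rw [FAtom.chosen.injEq] at hx
      obtain ⟨hji, hwv⟩ := hx
      have hj : j = i := Fin.ext hji
      subst hj
      exact hsurv _ (Set.mem_insert _ _) (by rw [hwv]; exact h2)
    · simp at hx
  have hMN := aux_leastModel_le hmod
  rw [← hM'] at hMN
  exact (hMN h1).2 rfl

lemma aux_M_fd (hM : IsStableModel (foe P edb) M) (i : Fin P.length) (w w' : List C)
    (h1 : FAtom.chosen (i : ℕ) w ∈ M) (h2 : FAtom.chosen (i : ℕ) w' ∈ M) :
    ¬ ChConf P i w w' := by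
  rintro ⟨g, hg, ν, ν', hw, hw', hag, hd⟩
  have hMmod := aux_reduct_model hM
  have hrule : (⟨FAtom.diff (i : ℕ) ((P.get i).W.map ν),
      {FAtom.chosen (i : ℕ) ((P.get i).W.map ν')}, ∅⟩ : GRule (FAtom S C)) ∈ foe P edb :=
    Or.inr ⟨i, g, hg, ν, ν', hag, hd, rfl⟩
  have hdiffM : FAtom.diff (i : ℕ) ((P.get i).W.map ν) ∈ M := by
    refine hMmod _ ⟨_, hrule, by simp, rfl⟩ ?_ (by simp)
    intro x hx
    rw [Set.mem_singleton_iff] at hx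
    subst hx
    rw [← hw']; exact h2
  exact aux_not_chosen_diff hM (by rw [← hw]; exact h1) hdiffM

lemma aux_M_subset_Cl (hM : IsStableModel (foe P edb) M) (hsub : edb ⊆ edb')
    (_hpos : P.Positive) {Ch : Set (Fin P.length × List C)}
    (hb : ∀ (i : Fin P.length) (w : List C), FAtom.chosen (i : ℕ) w ∈ M → (i, w) ∈ Ch) :
    M ⊆ Cl P edb' Ch := by
  have hM' : M = leastModel (reduct (foe P edb) M) := hM
  have hMmod := aux_reduct_model hM
  have hmod : IsModel (reduct (foe P edb) M) (Cl P edb' Ch ∩ M) := by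
    rintro r ⟨r', hr', hsurv, rfl⟩ hposN _
    have hposC : r'.pos ⊆ Cl P edb' Ch := Set.Subset.trans hposN Set.inter_subset_left
    have hposM : r'.pos ⊆ M := Set.Subset.trans hposN Set.inter_subset_right
    have hheadM : r'.head ∈ M := hMmod (⟨r'.head, r'.pos, ∅⟩ : GRule (FAtom S C)) ⟨r', hr', hsurv, rfl⟩ hposM (by simp)
    refine ⟨?_, hheadM⟩
    rcases hr' with ((((⟨a, ha, rfl⟩ | ⟨j, ν, hne, rfl⟩) | ⟨j, ν, hne, rfl⟩) |
      ⟨j, ν, hne, rfl⟩) | ⟨j, g, hg, ν, ν', hag, hd, rfl⟩)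
    · exact aux_Cl_model _ (mem_RCh_fact (hsub ha)) (by simp) (by simp)
    · exact aux_Cl_model _ (mem_RCh_plain hne) hposC (by simp)
    · exact aux_Cl_model _ (mem_RCh_mod hne) hposC (by simp)
    · exact aux_Cl_model _ (mem_RCh_chosen hne (hb j _ hheadM)) hposC (by simp)
    · exact aux_Cl_model _ (mem_RCh_diff hg hag hd) hposC (by simp)
  have hMN := aux_leastModel_le hmod
  rw [← hM'] at hMN
  exact Set.Subset.trans hMN Set.inter_subset_left

end Aux5
/-- For positive choice programs with the same intensional
rules `P` and extensional databases `edb ⊆ edb'`, every choice model `M` of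
the first program extends to a choice model `M' ⊇ M` of the second: the
multi-valued mapping from `edb` to choice models is monotonic. -/
theorem positive_choice_program_monotonic
    {S : Schema} {C : Type} [Finite S.pred] [Finite C]
    (P : CProgram S C) (hpos : P.Positive)
    (edb edb' : Set (GAtom S C)) (hsub : edb ⊆ edb')
    (M : Set (FAtom S C)) (hM : IsChoiceModel P edb M) :
    ∃ M' : Set (FAtom S C), IsChoiceModel P edb' M' ∧ M ⊆ M' := by
  classical
  have hMst : IsStableModel (foe P edb) M := hM
  have hpos' : ∀ j : Fin P.length, (P.get j).neg = [] := fun j => hpos _ (List.get_mem P j)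
  -- the collection of admissible chosen sets
  set Good : Set (Set (Fin P.length × List C)) :=
    {Ch | (∀ (i : Fin P.length) (w w' : List C),
            (i, w) ∈ Ch → (i, w') ∈ Ch → ¬ ChConf P i w w') ∧
          (∀ (i : Fin P.length) (w : List C), FAtom.chosen (i : ℕ) w ∈ M → (i, w) ∈ Ch) ∧
          (∀ (i : Fin P.length) (w : List C), (i, w) ∈ Ch →
            FAtom.chosen (i : ℕ) w ∈ Cl P edb' Ch)} with hGoodDef
  have hCh0 : {p : Fin P.length × List C | FAtom.chosen (p.1 : ℕ) p.2 ∈ M} ∈ Good := by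
    refine ⟨fun i w w' h1 h2 => aux_M_fd hMst i w w' h1 h2, fun i w h => h, fun i w h => ?_⟩
    exact aux_M_subset_Cl hMst hsub hpos (fun i w h => h) h
  have chainbound : ∀ c ⊆ Good, IsChain (· ⊆ ·) c → c.Nonempty →
      ∃ ub ∈ Good, ∀ s ∈ c, s ⊆ ub := by
    rintro c hcG hchain ⟨Ch1, hCh1⟩
    refine ⟨⋃₀ c, ⟨?_, ?_, ?_⟩, fun s hs => Set.subset_sUnion_of_mem hs⟩
    · rintro i w w' ⟨s, hs, h1⟩ ⟨t, ht, h2⟩ hconf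
      rcases hchain.total hs ht with hst | hts
      · exact (hcG ht).1 i w w' (hst h1) h2 hconf
      · exact (hcG hs).1 i w w' h1 (hts h2) hconf
    · intro i w h
      exact Set.subset_sUnion_of_mem hCh1 ((hcG hCh1).2.1 i w h)
    · rintro i w ⟨s, hs, h⟩
      exact aux_Cl_mono (Set.subset_sUnion_of_mem hs) ((hcG hs).2.2 i w h)
  obtain ⟨Ch, hCh0sub, hChmax⟩ := zorn_subset_nonempty Good chainbound _ hCh0
  obtain ⟨hfd, hmc, hreal⟩ := hChmax.prop
  -- the candidate model
  refine ⟨Cl P edb' Ch, ?_, aux_M_subset_Cl hMst hsub hpos hmc⟩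
  -- X is a model of the reduct of foe(P, edb') by X
  have hBmod : IsModel (reduct (foe P edb') (Cl P edb' Ch)) (Cl P edb' Ch) := by
    rintro r ⟨r', hr', hsurv, rfl⟩ hposX _
    rcases hr' with ((((⟨a, ha, rfl⟩ | ⟨j, ν, hne, rfl⟩) | ⟨j, ν, hne, rfl⟩) |
      ⟨j, ν, hne, rfl⟩) | ⟨j, g, hg, ν, ν', hag, hd, rfl⟩)
    · exact aux_Cl_model _ (mem_RCh_fact ha) (by simp) (by simp)
    · exact aux_Cl_model _ (mem_RCh_plain hne) hposX (by simp)
    · exact aux_Cl_model _ (mem_RCh_mod hne) hposX (by simp)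
    · -- chosen rule
      by_cases hin : (j, (P.get j).W.map ν) ∈ Ch
      · exact aux_Cl_model _ (mem_RCh_chosen hne hin) hposX (by simp)
      · exfalso
        apply hin
        have hdiffX : FAtom.diff (j : ℕ) ((P.get j).W.map ν) ∉ Cl P edb' Ch :=
          hsurv _ (Set.mem_insert _ _)
        have hGood' : insert (j, (P.get j).W.map ν) Ch ∈ Good := by
          have key : ∀ w', (j, w') ∈ Ch → ¬ ChConf P j ((P.get j).W.map ν) w' := by
            intro w' hw' hconf
            obtain ⟨g', hg', ν₁, ν₂, hwv, hwv', hag', hd'⟩ := hconf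
            have hcw' : FAtom.chosen (j : ℕ) w' ∈ Cl P edb' Ch := hreal j w' hw'
            have hdX : FAtom.diff (j : ℕ) ((P.get j).W.map ν₁) ∈ Cl P edb' Ch := by
              refine aux_Cl_model _ (mem_RCh_diff hg' hag' hd') ?_ (by simp)
              intro x hx
              rw [Set.mem_singleton_iff] at hx
              subst hx
              rw [← hwv']; exact hcw'
            exact hdiffX (by rw [hwv]; exact hdX)
          refine ⟨?_, ?_, ?_⟩
          · intro i w₁ w₂ h1 h2 hconf
            rcases h1 with h1 | h1 <;> rcases h2 with h2 | h2
            · obtain ⟨hi, hw⟩ := Prod.mk.injEq .. ▸ h1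
              obtain ⟨hi', hw'⟩ := Prod.mk.injEq .. ▸ h2
              subst hi; subst hw; subst hw'
              exact aux_conf_irrefl hconf
            · obtain ⟨hi, hw⟩ := Prod.mk.injEq .. ▸ h1
              subst hi; subst hw
              exact key w₂ h2 hconf
            · obtain ⟨hi, hw⟩ := Prod.mk.injEq .. ▸ h2
              subst hi; subst hw
              exact key w₁ h1 (aux_conf_symm hconf)
            · exact hfd i w₁ w₂ h1 h2 hconf
          · intro i w h
            exact Set.mem_insert_of_mem _ (hmc i w h)
          · intro i w h
            rcases h with h | h
            · obtain ⟨hi, hw⟩ := Prod.mk.injEq .. ▸ h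
              subst hi; subst hw
              refine aux_Cl_model _ (mem_RCh_chosen hne (Set.mem_insert _ _)) ?_ (by simp)
              exact Set.Subset.trans hposX (aux_Cl_mono (Set.subset_insert _ _))
            · exact aux_Cl_mono (Set.subset_insert _ _) (hreal i w h)
        have := hChmax.2 hGood' (Set.subset_insert _ _)
        exact this (Set.mem_insert _ _)
    · exact aux_Cl_model _ (mem_RCh_diff hg hag hd) hposX (by simp)
  -- X is contained in the least model of the reduct
  have hL : IsModel (RCh P edb' Ch) (leastModel (reduct (foe P edb') (Cl P edb' Ch))) := by
    have hLmod : IsModel (reduct (foe P edb') (Cl P edb' Ch))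
        (leastModel (reduct (foe P edb') (Cl P edb' Ch))) :=
      aux_leastModel_isModel aux_reduct_neg
    intro r hr hposL _
    rcases hr with ((((⟨a, ha, rfl⟩ | ⟨j, ν, hne, rfl⟩) | ⟨j, ν, hne, rfl⟩) |
      ⟨j, ν, hne, hch, rfl⟩) | ⟨j, g, hg, ν, ν', hag, hd, rfl⟩)
    · exact hLmod _ ⟨_, Or.inl (Or.inl (Or.inl (Or.inl ⟨a, ha, rfl⟩))), by simp, rfl⟩
        (by simp) (by simp)
    · refine hLmod _ ⟨_, Or.inl (Or.inl (Or.inl (Or.inr ⟨j, ν, hne, rfl⟩))), ?_, rfl⟩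
        hposL (by simp)
      rw [aux_negBody_empty (hpos' j) ν]; simp
    · refine hLmod _ ⟨_, Or.inl (Or.inl (Or.inr ⟨j, ν, hne, rfl⟩)), ?_, rfl⟩
        hposL (by simp)
      rw [aux_negBody_empty (hpos' j) ν]; simp
    · -- chosen rule: its diff atom is not in X
      have hdiff : FAtom.diff (j : ℕ) ((P.get j).W.map ν) ∉ Cl P edb' Ch := by
        intro hdX
        obtain ⟨i₂, hi₂, w', hcw', hconf⟩ := aux_diff_mem hdX
        have hi : i₂ = j := Fin.ext hi₂
        subst hi
        obtain ⟨i₃, hi₃, hmem3⟩ := aux_chosen_mem hcw'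
        have hi' : i₃ = i₂ := Fin.ext hi₃
        subst hi'
        exact hfd i₃ _ w' hch hmem3 hconf
      refine hLmod _ ⟨_, Or.inl (Or.inr ⟨j, ν, hne, rfl⟩), ?_, rfl⟩ hposL (by simp)
      intro x hx
      rcases Set.mem_insert_iff.mp hx with hx | hx
      · subst hx; exact hdiff
      · rw [aux_negBody_empty (hpos' j) ν] at hx; simp at hx
    · exact hLmod _ ⟨_, Or.inr ⟨j, g, hg, ν, ν', hag, hd, rfl⟩, by simp, rfl⟩
        hposL (by simp)
  show IsStableModel (foe P edb') (Cl P edb' Ch)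
  exact Set.Subset.antisymm (aux_leastModel_le hL) (aux_leastModel_le hBmod)
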